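/- Let η ∈ {i,j,k}. If W₁ is an n×n quaternion matrix satisfying A₃ W₁ = E₃ and W₁ A₃^{η*} = E₃^{η*}, then W := (W₁ + W₁^{η*})/2 is η-Hermitian and satisfies A₃ W = E₃. -/

import Mathlib

open scoped Quaternion Matrix

/-- The η-conjugate transpose `M^{η*} = -η M* η` of a quaternion matrix. -/
noncomputable def etaStar {a b : ℕ} (η : ℍ[ℝ]) (M : Matrix (Fin a) (Fin b) ℍ[ℝ]) :
    Matrix (Fin b) (Fin a) ℍ[ℝ] :=
  -(Matrix.scalar (Fin b) η * Mᴴ * Matrix.scalar (Fin a) η)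

instance : StarModule ℝ ℍ[ℝ] := ⟨fun r q => by ext <;> simp⟩

lemma eta_mul_self {η : ℍ[ℝ]}
    (hη : η = ⟨0, 1, 0, 0⟩ ∨ η = ⟨0, 0, 1, 0⟩ ∨ η = ⟨0, 0, 0, 1⟩) :
    η * η = -1 := by
  rcases hη with h | h | h <;>
    have h1 := congrArg QuaternionAlgebra.re h <;> have h2 := congrArg QuaternionAlgebra.imI h <;>
    have h3 := congrArg QuaternionAlgebra.imJ h <;> have h4 := congrArg QuaternionAlgebra.imK h <;>
    clear h <;> dsimp only at h1 h2 h3 h4 <;>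
    ext <;> simp [Quaternion.re_mul, Quaternion.imI_mul, Quaternion.imJ_mul, Quaternion.imK_mul, h1, h2, h3, h4]

lemma eta_star {η : ℍ[ℝ]}
    (hη : η = ⟨0, 1, 0, 0⟩ ∨ η = ⟨0, 0, 1, 0⟩ ∨ η = ⟨0, 0, 0, 1⟩) :
    star η = -η := by
  rcases hη with h | h | h <;>
    have h1 := congrArg QuaternionAlgebra.re h <;> have h2 := congrArg QuaternionAlgebra.imI h <;>
    have h3 := congrArg QuaternionAlgebra.imJ h <;> have h4 := congrArg QuaternionAlgebra.imK h <;>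
    clear h <;> dsimp only at h1 h2 h3 h4 <;>
    ext <;> simp [h1, h2, h3, h4]

lemma scalar_mul_self {k : ℕ} {η : ℍ[ℝ]}
    (hη : η = ⟨0, 1, 0, 0⟩ ∨ η = ⟨0, 0, 1, 0⟩ ∨ η = ⟨0, 0, 0, 1⟩) :
    Matrix.scalar (Fin k) η * Matrix.scalar (Fin k) η = -1 := by
  rw [← map_mul, eta_mul_self hη, map_neg, map_one]

lemma etaStar_mul {a b c : ℕ} {η : ℍ[ℝ]}
    (hη : η = ⟨0, 1, 0, 0⟩ ∨ η = ⟨0, 0, 1, 0⟩ ∨ η = ⟨0, 0, 0, 1⟩)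
    (A : Matrix (Fin a) (Fin b) ℍ[ℝ]) (B : Matrix (Fin b) (Fin c) ℍ[ℝ]) :
    etaStar η (A * B) = etaStar η B * etaStar η A := by
  simp only [etaStar, Matrix.conjTranspose_mul, Matrix.neg_mul, Matrix.mul_neg, neg_neg]
  rw [show (Matrix.scalar (Fin c) η * Bᴴ * Matrix.scalar (Fin b) η) *
      (Matrix.scalar (Fin b) η * Aᴴ * Matrix.scalar (Fin a) η)
      = Matrix.scalar (Fin c) η * Bᴴ *
        ((Matrix.scalar (Fin b) η * Matrix.scalar (Fin b) η) * (Aᴴ * Matrix.scalar (Fin a) η))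
      from by simp only [Matrix.mul_assoc], scalar_mul_self hη]
  simp [Matrix.mul_neg, Matrix.neg_mul, Matrix.mul_assoc]

lemma etaStar_etaStar {a b : ℕ} {η : ℍ[ℝ]}
    (hη : η = ⟨0, 1, 0, 0⟩ ∨ η = ⟨0, 0, 1, 0⟩ ∨ η = ⟨0, 0, 0, 1⟩)
    (A : Matrix (Fin a) (Fin b) ℍ[ℝ]) : etaStar η (etaStar η A) = A := by
  have hsc : ∀ (k : ℕ), (Matrix.scalar (Fin k) η)ᴴ = -(Matrix.scalar (Fin k) η) := by
    intro k
    simp only [Matrix.scalar_apply, Matrix.diagonal_conjTranspose]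
    simp [Pi.star_def, eta_star hη, Matrix.diagonal_neg]
  simp only [etaStar, Matrix.conjTranspose_neg, Matrix.conjTranspose_mul,
    Matrix.conjTranspose_conjTranspose, hsc, Matrix.mul_neg, Matrix.neg_mul, neg_neg]
  rw [show Matrix.scalar (Fin a) η * (Matrix.scalar (Fin a) η * (A * Matrix.scalar (Fin b) η))
      * Matrix.scalar (Fin b) η
      = (Matrix.scalar (Fin a) η * Matrix.scalar (Fin a) η) *
        (A * (Matrix.scalar (Fin b) η * Matrix.scalar (Fin b) η))
      from by simp only [Matrix.mul_assoc], scalar_mul_self hη, scalar_mul_self hη]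
  simp

lemma etaStar_add {a b : ℕ} (η : ℍ[ℝ]) (A B : Matrix (Fin a) (Fin b) ℍ[ℝ]) :
    etaStar η (A + B) = etaStar η A + etaStar η B := by
  simp only [etaStar, Matrix.conjTranspose_add, Matrix.mul_add, Matrix.add_mul, neg_add]

lemma etaStar_smul {a b : ℕ} (η : ℍ[ℝ]) (r : ℝ) (A : Matrix (Fin a) (Fin b) ℍ[ℝ]) :
    etaStar η (r • A) = r • etaStar η A := by
  simp only [etaStar, Matrix.conjTranspose_smul, star_trivial, Matrix.mul_smul,
    Matrix.smul_mul, smul_neg]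

/-- If `A₃ W₁ = E₃` and `W₁ A₃^{η*} = E₃^{η*}`, then `W = (W₁ + W₁^{η*})/2` is
η-Hermitian and satisfies `A₃ W = E₃`. -/
theorem stmt_14 {m n : ℕ} (η : ℍ[ℝ])
    (hη : η = ⟨0, 1, 0, 0⟩ ∨ η = ⟨0, 0, 1, 0⟩ ∨ η = ⟨0, 0, 0, 1⟩)
    (A₃ : Matrix (Fin m) (Fin n) ℍ[ℝ]) (E₃ : Matrix (Fin m) (Fin n) ℍ[ℝ])
    (W₁ : Matrix (Fin n) (Fin n) ℍ[ℝ])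
    (h1 : A₃ * W₁ = E₃) (h2 : W₁ * etaStar η A₃ = etaStar η E₃) :
    etaStar η ((1 / 2 : ℝ) • (W₁ + etaStar η W₁))
        = (1 / 2 : ℝ) • (W₁ + etaStar η W₁) ∧
      A₃ * ((1 / 2 : ℝ) • (W₁ + etaStar η W₁)) = E₃ := by
  have key : A₃ * etaStar η W₁ = E₃ := by
    have := congrArg (etaStar η) h2
    rwa [etaStar_mul hη, etaStar_etaStar hη, etaStar_etaStar hη] at this
  constructor
  · rw [etaStar_smul, etaStar_add, etaStar_etaStar hη, add_comm]
  · rw [Matrix.mul_smul, Matrix.mul_add, h1, key, ← two_smul ℝ E₃, smul_smul]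
    norm_num
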